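/- For every a ∈ B_int and every b ∈ B_half, the segment from a to b is a face of the Delone polytope of D_{2m}^* centered at u: IsExtreme ℝ (convexHull ℝ (B_int ∪ B_half)) (segment ℝ a b). (These edges between the two cubes of the free sum are the edges giving rise to the half-integer vertices of the red Venkov graph of D_{2m}^*.) -/

import Mathlib

set_option maxHeartbeats 1600000 in
/-- For every vertex `a` of the integer cube and every vertex `b` of the half-integer cube,
the segment from `a` to `b` is a face of the Delone polytope (free sum) of `D_{2m}^*`
centered at `u`. -/
theorem stmt_7 (m : ℕ) (hm : 1 ≤ m)
    (S : Finset (Fin (2 * m))) (hS : S.card = m)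
    (u : EuclideanSpace ℝ (Fin (2 * m)))
    (huS : ∀ i ∈ S, ∃ k : ℤ, u i = (k : ℝ) + 1/2)
    (huI : ∀ i ∉ S, ∃ k : ℤ, u i = (k : ℝ))
    (Bhalf Bint : Set (EuclideanSpace ℝ (Fin (2 * m))))
    (hBhalf : Bhalf = {x : EuclideanSpace ℝ (Fin (2 * m)) |
      (∀ i ∈ S, x i = u i) ∧ (∀ i ∉ S, |x i - u i| = 1/2)})
    (hBint : Bint = {x : EuclideanSpace ℝ (Fin (2 * m)) |
      (∀ i ∉ S, x i = u i) ∧ (∀ i ∈ S, |x i - u i| = 1/2)}) :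
    ∀ a ∈ Bint, ∀ b ∈ Bhalf,
      IsExtreme ℝ (convexHull ℝ (Bint ∪ Bhalf)) (segment ℝ a b) := by
  subst hBhalf hBint
  rintro a ⟨haI, haS⟩ b ⟨hbS, hbI⟩
  -- the linear functional
  set c : EuclideanSpace ℝ (Fin (2 * m)) :=
    WithLp.toLp 2 (fun i => if i ∈ S then 2 * (a i - u i) else 2 * (b i - u i)) with hc
  have habs : ∀ i, |c i| = 1 := by
    intro i
    by_cases hi : i ∈ S
    · simp only [hc, hi, if_pos, abs_mul]
      rw [haS i hi]; norm_num
    · simp only [hc, hi, if_neg, not_false_iff, abs_mul]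
      rw [hbI i hi]; norm_num
  have hcne : ∀ i, c i ≠ 0 := by
    intro i h
    have := habs i
    rw [h, abs_zero] at this; norm_num at this
  have hca : ∀ i ∈ S, c i * (a i - u i) = 1/2 := by
    intro i hi
    have h1 : |a i - u i| = 1/2 := haS i hi
    have h2 : (a i - u i) ^ 2 = (1/2 : ℝ) ^ 2 := by rw [← sq_abs, h1]
    simp only [hc, hi, if_pos]
    nlinarith [h2]
  have hcb : ∀ i ∉ S, c i * (b i - u i) = 1/2 := by
    intro i hi
    have h1 : |b i - u i| = 1/2 := hbI i hi
    have h2 : (b i - u i) ^ 2 = (1/2 : ℝ) ^ 2 := by rw [← sq_abs, h1]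
    simp only [hc, hi, if_neg, not_false_iff]
    nlinarith [h2]
  set f : EuclideanSpace ℝ (Fin (2 * m)) →L[ℝ] ℝ := innerSL ℝ c with hfdef
  have hf : ∀ x, f x = ∑ i, c i * x i := by
    intro x
    simp [hfdef, PiLp.inner_apply, RCLike.inner_apply, conj_trivial, mul_comm]
  -- generic max/uniqueness lemma
  have aux : ∀ x z : EuclideanSpace ℝ (Fin (2 * m)),
      (∀ i, 0 ≤ c i * (z i - x i)) → f x ≤ f z ∧ (f x = f z → x = z) := by
    intro x z h
    have hsum : f z - f x = ∑ i, c i * (z i - x i) := by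
      rw [hf, hf, ← Finset.sum_sub_distrib]
      congr 1; ext i; ring
    have hnn : 0 ≤ f z - f x := by
      rw [hsum]; exact Finset.sum_nonneg fun i _ => h i
    refine ⟨by linarith, fun heq => ?_⟩
    have hz : ∑ i, c i * (z i - x i) = 0 := by rw [← hsum, heq]; ring
    have hall := (Finset.sum_eq_zero_iff_of_nonneg fun i _ => h i).1 hz
    ext i
    have := hall i (Finset.mem_univ i)
    have hzi : z i - x i = 0 := by
      rcases mul_eq_zero.1 this with h' | h'
      · exact absurd h' (hcne i)
      · exact h'
    linarith [hzi]
  -- the slab sets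
  set Cint : Set (EuclideanSpace ℝ (Fin (2 * m))) :=
    {x | (∀ i ∉ S, x i = u i) ∧ ∀ i ∈ S, c i * (x i - u i) ≤ 1/2} with hCint
  set Chalf : Set (EuclideanSpace ℝ (Fin (2 * m))) :=
    {x | (∀ i ∈ S, x i = u i) ∧ ∀ i ∉ S, c i * (x i - u i) ≤ 1/2} with hChalf
  have habs_le : ∀ (i : Fin (2 * m)) (x : EuclideanSpace ℝ (Fin (2 * m))),
      |x i - u i| = 1/2 → c i * (x i - u i) ≤ 1/2 := by
    intro i x hx
    calc c i * (x i - u i) ≤ |c i * (x i - u i)| := le_abs_self _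
      _ = |c i| * |x i - u i| := abs_mul _ _
      _ = 1/2 := by rw [habs i, hx]; ring
  have hBiC : {x : EuclideanSpace ℝ (Fin (2 * m)) |
      (∀ i ∉ S, x i = u i) ∧ (∀ i ∈ S, |x i - u i| = 1/2)} ⊆ Cint := by
    rintro x ⟨h1, h2⟩
    exact ⟨h1, fun i hi => habs_le i x (h2 i hi)⟩
  have hBhC : {x : EuclideanSpace ℝ (Fin (2 * m)) |
      (∀ i ∈ S, x i = u i) ∧ (∀ i ∉ S, |x i - u i| = 1/2)} ⊆ Chalf := by
    rintro x ⟨h1, h2⟩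
    exact ⟨h1, fun i hi => habs_le i x (h2 i hi)⟩
  have hconv : ∀ (P : Fin (2 * m) → Prop) [DecidablePred P],
      Convex ℝ {x : EuclideanSpace ℝ (Fin (2 * m)) |
        (∀ i, ¬ P i → x i = u i) ∧ ∀ i, P i → c i * (x i - u i) ≤ 1/2} := by
    intro P _
    rintro x ⟨hx1, hx2⟩ y ⟨hy1, hy2⟩ s t hs ht hst
    constructor
    · intro i hi
      have : (s • x + t • y) i = s * x i + t * y i := by simp
      rw [this, hx1 i hi, hy1 i hi, ← add_mul, hst, one_mul]
    · intro i hi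
      have hxy : (s • x + t • y) i = s * x i + t * y i := by simp
      rw [hxy]
      have h1 := hx2 i hi
      have h2 := hy2 i hi
      have hu : s * u i + t * u i = u i := by rw [← add_mul, hst, one_mul]
      have heq : c i * (s * x i + t * y i - u i) =
          s * (c i * (x i - u i)) + t * (c i * (y i - u i)) := by
        linear_combination c i * u i * hst
      rw [heq]
      have A := mul_le_mul_of_nonneg_left h1 hs
      have B := mul_le_mul_of_nonneg_left h2 ht
      linarith
  have hCintConv : Convex ℝ Cint := hconv (fun i => i ∈ S)
  have hChalfConv : Convex ℝ Chalf := by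
    have := hconv (fun i => i ∉ S)
    convert this using 2
    ext x
    constructor
    · rintro ⟨h1, h2⟩
      exact ⟨fun i hi => h1 i (not_not.1 hi), fun i hi => h2 i hi⟩
    · rintro ⟨h1, h2⟩
      exact ⟨fun i hi => h1 i (not_not.2 hi), fun i hi => h2 i hi⟩
  -- max/uniqueness over the slabs
  have hfa : ∀ p ∈ Cint, f p ≤ f a ∧ (f p = f a → p = a) := by
    rintro p ⟨h1, h2⟩
    apply aux
    intro i
    by_cases hi : i ∈ S
    · have := h2 i hi
      have h3 : c i * (a i - p i) = c i * (a i - u i) - c i * (p i - u i) := by ring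
      rw [h3, hca i hi]; linarith
    · rw [h1 i hi, haI i hi]; simp
  have hfb : ∀ q ∈ Chalf, f q ≤ f b ∧ (f q = f b → q = b) := by
    rintro q ⟨h1, h2⟩
    apply aux
    intro i
    by_cases hi : i ∈ S
    · rw [h1 i hi, hbS i hi]; simp
    · have := h2 i hi
      have h3 : c i * (b i - q i) = c i * (b i - u i) - c i * (q i - u i) := by ring
      rw [h3, hcb i hi]; linarith
  -- f a = f b
  have hScompl : Sᶜ.card = m := by
    have : Sᶜ.card = Fintype.card (Fin (2 * m)) - S.card := Finset.card_compl S
    rw [this, Fintype.card_fin, hS]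
    omega
  have hfab : f a = f b := by
    have hsplit : ∀ x : EuclideanSpace ℝ (Fin (2 * m)),
        f x = ∑ i ∈ S, c i * x i + ∑ i ∈ Sᶜ, c i * x i := by
      intro x
      rw [hf, ← Finset.sum_add_sum_compl S]
    rw [hsplit a, hsplit b]
    have h1 : ∑ i ∈ S, c i * a i - ∑ i ∈ S, c i * b i = (m : ℝ) * (1/2) := by
      rw [← Finset.sum_sub_distrib]
      have : ∀ i ∈ S, c i * a i - c i * b i = 1/2 := by
        intro i hi
        have : c i * a i - c i * b i = c i * (a i - u i) - c i * (b i - u i) := by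
          rw [hbS i hi]; ring
        rw [this, hca i hi, hbS i hi]
        simp
      rw [Finset.sum_congr rfl this, Finset.sum_const, hS]
      simp
    have h2 : ∑ i ∈ Sᶜ, c i * b i - ∑ i ∈ Sᶜ, c i * a i = (m : ℝ) * (1/2) := by
      rw [← Finset.sum_sub_distrib]
      have : ∀ i ∈ Sᶜ, c i * b i - c i * a i = 1/2 := by
        intro i hi
        rw [Finset.mem_compl] at hi
        have : c i * b i - c i * a i = c i * (b i - u i) - c i * (a i - u i) := by
          rw [haI i hi]; ring
        rw [this, hcb i hi, haI i hi]
        simp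
      rw [Finset.sum_congr rfl this, Finset.sum_const, hScompl]
      simp
    linarith
  -- membership facts
  have haMem : a ∈ ({x : EuclideanSpace ℝ (Fin (2 * m)) |
      (∀ i ∉ S, x i = u i) ∧ (∀ i ∈ S, |x i - u i| = 1/2)} : Set _) := ⟨haI, haS⟩
  have hbMem : b ∈ ({x : EuclideanSpace ℝ (Fin (2 * m)) |
      (∀ i ∈ S, x i = u i) ∧ (∀ i ∉ S, |x i - u i| = 1/2)} : Set _) := ⟨hbS, hbI⟩
  have haU : a ∈ ({x : EuclideanSpace ℝ (Fin (2 * m)) |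
        (∀ i ∉ S, x i = u i) ∧ (∀ i ∈ S, |x i - u i| = 1/2)} ∪
      {x : EuclideanSpace ℝ (Fin (2 * m)) |
        (∀ i ∈ S, x i = u i) ∧ (∀ i ∉ S, |x i - u i| = 1/2)}) := Or.inl haMem
  have hbU : b ∈ ({x : EuclideanSpace ℝ (Fin (2 * m)) |
        (∀ i ∉ S, x i = u i) ∧ (∀ i ∈ S, |x i - u i| = 1/2)} ∪
      {x : EuclideanSpace ℝ (Fin (2 * m)) |
        (∀ i ∈ S, x i = u i) ∧ (∀ i ∉ S, |x i - u i| = 1/2)}) := Or.inr hbMem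
  -- the hull is bounded by f a
  have hhull_le : ∀ y ∈ convexHull ℝ
      ({x : EuclideanSpace ℝ (Fin (2 * m)) |
        (∀ i ∉ S, x i = u i) ∧ (∀ i ∈ S, |x i - u i| = 1/2)} ∪
      {x : EuclideanSpace ℝ (Fin (2 * m)) |
        (∀ i ∈ S, x i = u i) ∧ (∀ i ∉ S, |x i - u i| = 1/2)}), f y ≤ f a := by
    intro y hy
    have hsub : ({x : EuclideanSpace ℝ (Fin (2 * m)) |
        (∀ i ∉ S, x i = u i) ∧ (∀ i ∈ S, |x i - u i| = 1/2)} ∪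
      {x : EuclideanSpace ℝ (Fin (2 * m)) |
        (∀ i ∈ S, x i = u i) ∧ (∀ i ∉ S, |x i - u i| = 1/2)}) ⊆
        {y : EuclideanSpace ℝ (Fin (2 * m)) | f y ≤ f a} := by
      rintro z (hz | hz)
      · exact (hfa z (hBiC hz)).1
      · rw [Set.mem_setOf_eq, hfab]
        exact (hfb z (hBhC hz)).1
    exact convexHull_min hsub (convex_halfSpace_le ⟨f.map_add, f.map_smul⟩ (f a)) hy
  -- exposed set equals the segment
  have hexp : IsExposed ℝ (convexHull ℝ
      ({x : EuclideanSpace ℝ (Fin (2 * m)) |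
        (∀ i ∉ S, x i = u i) ∧ (∀ i ∈ S, |x i - u i| = 1/2)} ∪
      {x : EuclideanSpace ℝ (Fin (2 * m)) |
        (∀ i ∈ S, x i = u i) ∧ (∀ i ∉ S, |x i - u i| = 1/2)}))
      (segment ℝ a b) := by
    intro _
    refine ⟨f, ?_⟩
    ext x
    constructor
    · rintro ⟨s, t, hs, ht, hst, rfl⟩
      constructor
      · exact (convex_convexHull ℝ _).segment_subset
          (subset_convexHull ℝ _ haU) (subset_convexHull ℝ _ hbU)
          ⟨s, t, hs, ht, hst, rfl⟩
      · intro y hy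
        have hfx : f (s • a + t • b) = f a := by
          rw [map_add, map_smul, map_smul, smul_eq_mul, smul_eq_mul, ← hfab,
            ← add_mul, hst, one_mul]
        rw [hfx]
        exact hhull_le y hy
    · rintro ⟨hx, hmax⟩
      have hfx : f x = f a :=
        le_antisymm (hhull_le x hx) (hmax a (subset_convexHull ℝ _ haU))
      rw [convexHull_union ⟨a, haMem⟩ ⟨b, hbMem⟩, mem_convexJoin] at hx
      obtain ⟨p, hp, q, hq, s, t, hs, ht, hst, hx'⟩ := hx
      have hpC : p ∈ Cint := convexHull_min hBiC hCintConv hp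
      have hqC : q ∈ Chalf := convexHull_min hBhC hChalfConv hq
      have hfp := hfa p hpC
      have hfq := hfb q hqC
      have hcomb : s * f p + t * f q = f a := by
        rw [← hfx, ← hx', map_add, map_smul, map_smul, smul_eq_mul, smul_eq_mul]
      have e1 : s * (f a - f p) + t * (f b - f q) = 0 := by
        have h' : s * f a + t * f b = f a := by rw [← hfab, ← add_mul, hst, one_mul]
        nlinarith [hcomb, h']
      have hp0 : s * (f a - f p) = 0 ∧ t * (f b - f q) = 0 := by
        constructor <;> nlinarith [e1, mul_nonneg hs (sub_nonneg.2 hfp.1),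
          mul_nonneg ht (sub_nonneg.2 (hfab ▸ hfq.1))]
      have hsa : s • p = s • a := by
        rcases eq_or_lt_of_le hs with h | h
        · rw [← h]; simp
        · have : f p = f a := by
            have := hp0.1
            have hs' : s ≠ 0 := ne_of_gt h
            have := mul_eq_zero.1 this
            rcases this with h' | h'
            · exact absurd h' hs'
            · linarith [h']
          rw [hfp.2 this]
      have htb : t • q = t • b := by
        rcases eq_or_lt_of_le ht with h | h
        · rw [← h]; simp
        · have : f q = f b := by
            have := hp0.2
            have ht' : t ≠ 0 := ne_of_gt h
            rcases mul_eq_zero.1 this with h' | h'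
            · exact absurd h' ht'
            · linarith [h']
          rw [hfq.2 this]
      exact ⟨s, t, hs, ht, hst, by rw [← hsa, ← htb, hx']⟩
  exact hexp.isExtreme
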